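/- Let G be a finite simple undirected graph on the vertex set {1,…,n}, let q ≥ 2 and k ≥ 1 be integers, and let C be an RDSS code for G over an alphabet A with |A| = q such that |C| ≥ q^k and the Hamming distance between any two distinct codewords of C is at least d. Then for every independent set U of G with |N(U)| ≤ k − 1, where N(U) = (∪_{u ∈ U} N(u)) ∖ U, one has d ≤ n − k + 1 − |U|. -/

import Mathlib

/-- A recoverable distributed storage system (RDSS) code for the graph with
adjacency relation `Adj` on `Fin n`, over alphabet `A`. -/
def IsRDSS {n : ℕ} {A : Type*} (Adj : Fin n → Fin n → Prop) (C : Set (Fin n → A)) : Prop :=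
  ∀ i : Fin n, ∀ x ∈ C, ∀ y ∈ C, (∀ j : Fin n, Adj i j → x j = y j) → x i = y i

/-- if an RDSS code for `G` of minimum distance `d` has size at
least `q^k`, then for every independent set `U` of `G` with `|N(U)| ≤ k − 1`,
`d ≤ n − k + 1 − |U|`. -/
theorem stmt13 {n q k d : ℕ} (hn : 1 ≤ n) (hq : 2 ≤ q) (hk : 1 ≤ k)
    {A : Type} [Fintype A] [DecidableEq A] (hA : Fintype.card A = q)
    (G : SimpleGraph (Fin n))
    (C : Set (Fin n → A)) (hC : IsRDSS G.Adj C)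
    (hsize : q ^ k ≤ C.ncard)
    (hdist : ∀ x ∈ C, ∀ y ∈ C, x ≠ y → d ≤ hammingDist x y)
    (U : Set (Fin n)) (hU : ∀ u ∈ U, ∀ v ∈ U, ¬ G.Adj u v)
    (hNU : ({v : Fin n | v ∉ U ∧ ∃ u ∈ U, G.Adj u v}).ncard ≤ k - 1) :
    (d : ℤ) ≤ (n : ℤ) - (k : ℤ) + 1 - (U.ncard : ℤ) := by
  classical
  set NUs : Set (Fin n) := {v : Fin n | v ∉ U ∧ ∃ u ∈ U, G.Adj u v} with hNUs
  set NUF : Finset (Fin n) := (Set.toFinite NUs).toFinset with hNUF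
  set UF : Finset (Fin n) := (Set.toFinite U).toFinset with hUF
  set CF : Finset (Fin n → A) := (Set.toFinite C).toFinset with hCF
  have hCFcard : q ^ k ≤ CF.card := by
    rwa [Set.ncard_eq_toFinset_card C (Set.toFinite C)] at hsize
  set t := NUF.card with ht
  have htk : t + 1 ≤ k := by
    have : NUs.ncard = t := Set.ncard_eq_toFinset_card NUs (Set.toFinite NUs)
    omega
  -- pigeonhole
  haveI hAne : Nonempty A := Fintype.card_pos_iff.mp (by omega)
  set φ : (Fin n → A) → (↥NUF → A) := fun x j => x j.1 with hφ
  have hcardfun : (Finset.univ : Finset (↥NUF → A)).card = q ^ t := by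
    simp [Fintype.card_fun, hA, ht]
  obtain ⟨b, -, hb⟩ := Finset.exists_le_card_fiber_of_mul_le_card_of_maps_to
      (f := φ) (s := CF) (t := (Finset.univ : Finset (↥NUF → A)))
      (fun a _ => Finset.mem_univ _) ⟨_, Finset.mem_univ (fun _ => Classical.arbitrary A)⟩
      (by rw [hcardfun, ← pow_add]
          have : t + (k - t) = k := by omega
          rw [this]; exact hCFcard)
  set D : Finset (Fin n → A) := {x ∈ CF | φ x = b} with hD
  have hDC : ∀ x ∈ D, x ∈ C := by
    intro x hx
    have := (Finset.mem_filter.mp hx).1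
    simpa [hCF, Set.Finite.mem_toFinset] using this
  have hDNU : ∀ x ∈ D, ∀ y ∈ D, ∀ j ∈ NUF, x j = y j := by
    intro x hx y hy j hj
    have hxb := (Finset.mem_filter.mp hx).2
    have hyb := (Finset.mem_filter.mp hy).2
    have := congrFun (hxb.trans hyb.symm) ⟨j, hj⟩
    exact this
  have hDU : ∀ x ∈ D, ∀ y ∈ D, ∀ i ∈ UF, x i = y i := by
    intro x hx y hy i hi
    have hiU : i ∈ U := by rwa [hUF, Set.Finite.mem_toFinset] at hi
    refine hC i x (hDC x hx) y (hDC y hy) ?_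
    intro j hij
    refine hDNU x hx y hy j ?_
    rw [hNUF, Set.Finite.mem_toFinset]
    refine ⟨fun hjU => hU i hiU j hjU hij, i, hiU, hij⟩
  set W : Finset (Fin n) := UF ∪ NUF with hW
  have hdisj : Disjoint UF NUF := by
    rw [Finset.disjoint_left]
    intro a ha haN
    rw [hUF, Set.Finite.mem_toFinset] at ha
    rw [hNUF, Set.Finite.mem_toFinset] at haN
    exact haN.1 ha
  set m := UF.card with hm
  have hWcard : W.card = m + t := by rw [hW, Finset.card_union_of_disjoint hdisj]
  have hDW : ∀ x ∈ D, ∀ y ∈ D, ∀ i ∈ W, x i = y i := by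
    intro x hx y hy i hi
    rcases Finset.mem_union.mp hi with h | h
    · exact hDU x hx y hy i h
    · exact hDNU x hx y hy i h
  -- D has at least 2 elements
  have hDcard : q ^ (k - t) ≤ D.card := hb
  have hD2 : 1 < D.card := by
    have h1 : q ≤ q ^ (k - t) := by
      calc q = q ^ 1 := (pow_one q).symm
      _ ≤ q ^ (k - t) := Nat.pow_le_pow_right (by omega) (by omega)
    omega
  obtain ⟨x₀, hx₀, y₀, hy₀, hxy₀⟩ := Finset.one_lt_card.mp hD2
  -- distance bound from agreement on W
  have hdistW : ∀ x ∈ D, ∀ y ∈ D, hammingDist x y ≤ Wᶜ.card := by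
    intro x hx y hy
    refine Finset.card_le_card ?_
    intro i hi
    simp only [hammingDist, Finset.mem_filter, Finset.mem_univ, true_and] at hi
    rw [Finset.mem_compl]
    intro hiW
    exact hi (hDW x hx y hy i hiW)
  have hWn : d + W.card ≤ n := by
    have h1 := hdist x₀ (hDC x₀ hx₀) y₀ (hDC y₀ hy₀) hxy₀
    have h2 := hdistW x₀ hx₀ y₀ hy₀
    have h3 : Wᶜ.card = n - W.card := by
      rw [Finset.card_compl, Fintype.card_fin]
    have h4 : W.card ≤ n := by
      have := Finset.card_le_univ W
      simpa using this
    omega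
  -- pick T ⊆ Wᶜ of size d - 1
  obtain ⟨T, hTW, hTcard⟩ := Finset.exists_subset_card_eq
      (s := Wᶜ) (n := d - 1)
      (by rw [Finset.card_compl, Fintype.card_fin]; omega)
  set S : Finset (Fin n) := (W ∪ T)ᶜ with hS
  have hdisjWT : Disjoint W T := by
    rw [Finset.disjoint_left]
    intro a ha haT
    exact (Finset.mem_compl.mp (hTW haT)) ha
  have hSub : W ∪ T ⊆ Finset.univ := Finset.subset_univ _
  have hScard : S.card = n - (m + t + (d - 1)) := by
    rw [hS, Finset.card_compl, Fintype.card_fin, Finset.card_union_of_disjoint hdisjWT,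
      hWcard, hTcard]
  -- injection from D to functions on S
  have hinj : Set.InjOn (fun (x : Fin n → A) (j : ↥S) => x j.1) (↑D : Set (Fin n → A)) := by
    intro x hx y hy hxy
    by_contra hne
    have h1 := hdist x (hDC x hx) y (hDC y hy) hne
    have h2 : hammingDist x y ≤ T.card := by
      refine Finset.card_le_card ?_
      intro i hi
      simp only [hammingDist, Finset.mem_filter, Finset.mem_univ, true_and] at hi
      by_contra hiT
      by_cases hiW : i ∈ W
      · exact hi (hDW x hx y hy i hiW)
      · have hiS : i ∈ S := by
          rw [hS, Finset.mem_compl, Finset.mem_union]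
          push_neg
          exact ⟨hiW, hiT⟩
        exact hi (congrFun hxy ⟨i, hiS⟩)
    have h3 : hammingDist x y ≠ 0 := fun h => hne (hammingDist_eq_zero.mp h)
    omega
  have hcount : D.card ≤ q ^ S.card := by
    have := Finset.card_le_card_of_injOn (fun (x : Fin n → A) (j : ↥S) => x j.1)
      (fun a _ => Finset.mem_univ _) hinj
    calc D.card ≤ (Finset.univ : Finset (↥S → A)).card := this
    _ = q ^ S.card := by simp [Fintype.card_fun, hA]
  have hexp : k - t ≤ S.card := by
    have h := hDcard.trans hcount
    exact (Nat.pow_le_pow_iff_right (by omega)).mp h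
  have hmU : U.ncard = m := Set.ncard_eq_toFinset_card U (Set.toFinite U)
  rw [hmU]
  push_cast
  omega
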